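/- Under the bistable Solow–Swan hypotheses, the smallest perturbation of the equilibrium E that does not return to E has size exactly E − E₁ (the shape-of-basin measure satisfies 𝒟 = E − E₁): every solution with initial condition x₀ ≥ 0 satisfying |x₀ − E| < E − E₁ converges to E, while the constant function x ≡ E₁ is a solution with |E₁ − E| = E − E₁ that does not converge to E. -/

import Mathlib

set_option maxHeartbeats 800000

/-- If `G c > 0` and a solution of `x' = G (x t)` (for `t ≥ 0`) starts above `c`,
then it stays above `c` for all `t ≥ 0`. -/
lemma solow_stay_above (G : ℝ → ℝ) (c : ℝ) (hGc : 0 < G c)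
    (x : ℝ → ℝ) (hx : ∀ t : ℝ, 0 ≤ t → HasDerivAt x (G (x t)) t)
    (h0 : c < x 0) : ∀ t : ℝ, 0 ≤ t → c < x t := by
  intro t₂ ht₂
  by_contra hle
  push_neg at hle
  have hcont : ∀ s : ℝ, 0 ≤ s → ContinuousAt x s := fun s hs => (hx s hs).continuousAt
  set S : Set ℝ := Set.Icc 0 t₂ ∩ x ⁻¹' Set.Iic c with hS
  have hne : t₂ ∈ S := ⟨⟨ht₂, le_rfl⟩, hle⟩
  have hxcont : ContinuousOn x (Set.Icc 0 t₂) := fun s hs =>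
    (hcont s hs.1).continuousWithinAt
  have hSclosed : IsClosed S :=
    hxcont.preimage_isClosed_of_isClosed isClosed_Icc isClosed_Iic
  have hSbdd : BddBelow S := ⟨0, fun s hs => hs.1.1⟩
  set t₁ : ℝ := sInf S with ht₁def
  have ht₁S : t₁ ∈ S := hSclosed.csInf_mem ⟨t₂, hne⟩ hSbdd
  have ht₁le : x t₁ ≤ c := ht₁S.2
  have ht₁pos : 0 < t₁ := by
    rcases lt_or_eq_of_le ht₁S.1.1 with h | h
    · exact h
    · exfalso; rw [← h] at ht₁le; linarith
  have hbefore : ∀ s : ℝ, 0 ≤ s → s < t₁ → c < x s := by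
    intro s hs0 hst
    by_contra hcs
    push_neg at hcs
    have hsS : s ∈ S := ⟨⟨hs0, le_trans hst.le ht₁S.1.2⟩, hcs⟩
    exact absurd (csInf_le hSbdd hsS) (not_le.mpr hst)
  have hxt₁ : x t₁ = c := by
    refine le_antisymm ht₁le ?_
    have htd : Filter.Tendsto x (nhdsWithin t₁ (Set.Iio t₁)) (nhds (x t₁)) :=
      ((hcont t₁ ht₁pos.le).tendsto).mono_left nhdsWithin_le_nhds
    refine ge_of_tendsto htd ?_
    filter_upwards [Ioo_mem_nhdsLT_of_mem (Set.mem_Ioc.mpr ⟨ht₁pos, le_rfl⟩)] with s hs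
    exact (hbefore s hs.1.le hs.2).le
  have hd : HasDerivAt x (G c) t₁ := by
    have := hx t₁ ht₁pos.le
    rwa [hxt₁] at this
  have hslope : Filter.Tendsto (slope x t₁) (nhdsWithin t₁ {t₁}ᶜ) (nhds (G c)) :=
    hasDerivAt_iff_tendsto_slope.mp hd
  have hev : ∀ᶠ s in nhdsWithin t₁ {t₁}ᶜ, 0 < slope x t₁ s :=
    hslope.eventually (eventually_gt_nhds hGc)
  have hev' : ∀ᶠ s in nhdsWithin t₁ (Set.Iio t₁), 0 < slope x t₁ s :=
    hev.filter_mono (nhdsWithin_mono t₁ (fun s hs => Set.mem_compl_singleton_iff.mpr hs.ne))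
  have hmem : Set.Ioo 0 t₁ ∈ nhdsWithin t₁ (Set.Iio t₁) :=
    Ioo_mem_nhdsLT_of_mem (Set.mem_Ioc.mpr ⟨ht₁pos, le_rfl⟩)
  have : ∀ᶠ s in nhdsWithin t₁ (Set.Iio t₁), False := by
    filter_upwards [hev', hmem] with s hs hs'
    rw [slope_def_field, hxt₁] at hs
    have hneg : s - t₁ < 0 := by linarith [hs'.2]
    have hnum : x s - c < 0 := by
      rcases div_pos_iff.mp hs with ⟨h1, h2⟩ | ⟨h1, h2⟩
      · linarith
      · exact h1
    have := hbefore s hs'.1.le hs'.2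
    linarith
  have hNB : (nhdsWithin t₁ (Set.Iio t₁)).NeBot := nhdsLT_neBot t₁
  exact (this.exists).elim fun _ h => h

/-- Symmetric version: if `G d < 0` and a solution starts below `d`, it stays below `d`. -/
lemma solow_stay_below (G : ℝ → ℝ) (d : ℝ) (hGd : G d < 0)
    (x : ℝ → ℝ) (hx : ∀ t : ℝ, 0 ≤ t → HasDerivAt x (G (x t)) t)
    (h0 : x 0 < d) : ∀ t : ℝ, 0 ≤ t → x t < d := by
  have key := solow_stay_above (fun z => -G (-z)) (-d) (by simpa using hGd)
    (fun t => -(x t)) (fun t ht => by have h := (hx t ht).neg; simp only [neg_neg]; exact h) (by simpa using h0)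
  intro t ht
  have := key t ht
  simpa using this


/-- If `W` has derivative at most `-δ < 0` on `[0, ∞)` and stays nonnegative, contradiction. -/
lemma solow_aux_neg (W f : ℝ → ℝ) (δ : ℝ) (hδ : 0 < δ)
    (hW : ∀ t : ℝ, 0 ≤ t → HasDerivAt W (f t) t)
    (hf : ∀ t : ℝ, 0 ≤ t → f t ≤ -δ)
    (hpos : ∀ t : ℝ, 0 ≤ t → 0 ≤ W t) : False := by
  have hW2 : ∀ t : ℝ, 0 ≤ t → HasDerivAt (fun s => W s + δ * s) (f t + δ) t := by
    intro t ht
    have h2 : HasDerivAt (fun s : ℝ => δ * s) δ t := by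
      simpa using (hasDerivAt_id t).const_mul δ
    exact (hW t ht).add h2
  have hanti : AntitoneOn (fun s => W s + δ * s) (Set.Ici 0) := by
    refine antitoneOn_of_deriv_nonpos (convex_Ici 0)
      (fun s hs => ((hW2 s hs).continuousAt).continuousWithinAt) ?_ ?_
    · rw [interior_Ici]
      exact fun s hs => ((hW2 s (le_of_lt hs)).differentiableAt).differentiableWithinAt
    · intro t ht
      rw [interior_Ici] at ht
      rw [(hW2 t ht.le).deriv]
      have := hf t ht.le
      linarith
  set T : ℝ := W 0 / δ + 1 with hTdef
  have hW0 : 0 ≤ W 0 := hpos 0 le_rfl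
  have hT : 0 < T := by
    have : 0 ≤ W 0 / δ := div_nonneg hW0 hδ.le
    simp only [hTdef]; linarith
  have key := hanti (Set.mem_Ici.mpr le_rfl) (Set.mem_Ici.mpr hT.le) hT.le
  simp only at key
  have hδT : δ * T = W 0 + δ := by
    have hδ0 : δ ≠ 0 := ne_of_gt hδ
    rw [hTdef, mul_add, mul_div_cancel₀ _ hδ0, mul_one]
  have := hpos T hT.le
  linarith

theorem solow_swan_shape_of_basin
    (F : ℝ → ℝ) (C E₁ E : ℝ) (hC : 0 < C)
    (hF : LocallyLipschitz F) (hF0 : F 0 = 0)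
    (hE₁ : 0 < E₁) (hE₁E : E₁ < E)
    (hE₁eq : F E₁ = C * E₁) (hEeq : F E = C * E)
    (hlt₁ : ∀ z ∈ Set.Ioo (0 : ℝ) E₁, F z < C * z)
    (hgt : ∀ z ∈ Set.Ioo E₁ E, C * z < F z)
    (hlt : ∀ z : ℝ, E < z → F z < C * z) :
    (∀ x₀ : ℝ, 0 ≤ x₀ → |x₀ - E| < E - E₁ →
      ∀ x : ℝ → ℝ, x 0 = x₀ →
        (∀ t : ℝ, 0 ≤ t → HasDerivAt x (F (x t) - C * x t) t) →
        Filter.Tendsto x Filter.atTop (nhds E)) ∧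
    ((fun _ : ℝ => E₁) 0 = E₁ ∧
      (∀ t : ℝ, 0 ≤ t →
        HasDerivAt (fun _ : ℝ => E₁) (F ((fun _ : ℝ => E₁) t) - C * (fun _ : ℝ => E₁) t) t) ∧
      |E₁ - E| = E - E₁ ∧
      ¬ Filter.Tendsto (fun _ : ℝ => E₁) Filter.atTop (nhds E)) := by
  constructor
  · intro x₀ hx₀nn habs x hx0 hx'
    set G : ℝ → ℝ := fun z => F z - C * z with hGdef
    have hx'G : ∀ t : ℝ, 0 ≤ t → HasDerivAt x (G (x t)) t := hx'
    have hx₀E₁ : E₁ < x₀ := by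
      have h1 : E - x₀ ≤ |x₀ - E| := by
        rw [abs_sub_comm]; exact le_abs_self _
      linarith
    -- choose confinement bounds
    set c : ℝ := (E₁ + min x₀ E) / 2 with hcdef
    have hminE₁ : E₁ < min x₀ E := lt_min hx₀E₁ hE₁E
    have hc1 : E₁ < c := by simp only [hcdef]; linarith
    have hc2 : c < E := by
      have : c < min x₀ E := by simp only [hcdef]; linarith
      exact lt_of_lt_of_le this (min_le_right _ _)
    have hc3 : c < x₀ := by
      have : c < min x₀ E := by simp only [hcdef]; linarith
      exact lt_of_lt_of_le this (min_le_left _ _)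
    set d : ℝ := max x₀ E + 1 with hddef
    have hd1 : E < d := by
      have := le_max_right x₀ E; simp only [hddef]; linarith
    have hd2 : x₀ < d := by
      have := le_max_left x₀ E; simp only [hddef]; linarith
    have hGc : 0 < G c := by
      have := hgt c ⟨hc1, hc2⟩; simp only [hGdef]; linarith
    have hGd : G d < 0 := by
      have := hlt d hd1; simp only [hGdef]; linarith
    have hlow : ∀ t : ℝ, 0 ≤ t → c < x t :=
      solow_stay_above G c hGc x hx'G (by rw [hx0]; exact hc3)
    have hupp : ∀ t : ℝ, 0 ≤ t → x t < d :=
      solow_stay_below G d hGd x hx'G (by rw [hx0]; exact hd2)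
    -- sign of (z - E) * G z on (c, d)
    have hGsign : ∀ z : ℝ, c ≤ z → z ≤ d → (z - E) * G z ≤ 0 := by
      intro z h1 h2
      rcases lt_trichotomy z E with h | h | h
      · have hz : 0 < G z := by
          have := hgt z ⟨lt_of_lt_of_le hc1 h1, h⟩; simp only [hGdef]; linarith
        nlinarith
      · rw [h]; simp
      · have hz : G z < 0 := by
          have := hlt z h; simp only [hGdef]; linarith
        nlinarith
    -- Lyapunov function V t = (x t - E)^2
    have hV : ∀ t : ℝ, 0 ≤ t →
        HasDerivAt (fun s => (x s - E) ^ 2) (2 * ((x t - E) * G (x t))) t := by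
      intro t ht
      have h1 : HasDerivAt (fun s => x s - E) (G (x t)) t := (hx'G t ht).sub_const E
      have h2 := h1.pow 2
      convert h2 using 1
      · rfl
      · rfl
      · rfl
      push_cast
      ring
    have hVcont : ContinuousOn (fun s => (x s - E) ^ 2) (Set.Ici 0) := fun s hs =>
      ((hV s hs).continuousAt).continuousWithinAt
    have hVdiff : DifferentiableOn ℝ (fun s => (x s - E) ^ 2) (interior (Set.Ici (0 : ℝ))) := by
      rw [interior_Ici]
      exact fun s hs => ((hV s (le_of_lt hs)).differentiableAt).differentiableWithinAt
    have hanti : AntitoneOn (fun s => (x s - E) ^ 2) (Set.Ici 0) := by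
      refine antitoneOn_of_deriv_nonpos (convex_Ici 0) hVcont hVdiff ?_
      intro t ht
      rw [interior_Ici] at ht
      rw [(hV t ht.le).deriv]
      have := hGsign (x t) (hlow t ht.le).le (hupp t ht.le).le
      linarith
    have hGcont : Continuous G := by
      have : Continuous F := hF.continuous
      exact this.sub (continuous_const.mul continuous_id)
    rw [Metric.tendsto_atTop]
    intro ε hε
    have hex : ∃ t₀ : ℝ, 0 ≤ t₀ ∧ (x t₀ - E) ^ 2 < ε ^ 2 := by
      by_contra hcon
      push_neg at hcon
      -- the trajectory stays in the compact set K, where (z-E)*G z ≤ -δ < 0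
      set K : Set ℝ := Set.Icc c d ∩ {z : ℝ | ε ≤ |z - E|} with hKdef
      have hKcomp : IsCompact K := by
        refine (isCompact_Icc).inter_right ?_
        have : {z : ℝ | ε ≤ |z - E|} = (fun z => |z - E|) ⁻¹' Set.Ici ε := rfl
        rw [this]
        exact IsClosed.preimage (by continuity) isClosed_Ici
      have hmemK : ∀ t : ℝ, 0 ≤ t → x t ∈ K := by
        intro t ht
        refine ⟨⟨(hlow t ht).le, (hupp t ht).le⟩, ?_⟩
        have h1 := hcon t ht
        simp only [Set.mem_setOf_eq]
        by_contra habs2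
        push_neg at habs2
        nlinarith [sq_abs (x t - E), abs_nonneg (x t - E)]
      have hKne : K.Nonempty := ⟨x 0, hmemK 0 le_rfl⟩
      have hgK : ContinuousOn (fun z : ℝ => (z - E) * G z) K :=
        Continuous.continuousOn ((continuous_id.sub continuous_const).mul hGcont)
      obtain ⟨z₀, hz₀K, hz₀max⟩ := hKcomp.exists_isMaxOn hKne hgK
      have hz₀neg : (z₀ - E) * G z₀ < 0 := by
        have hz₀ne : z₀ ≠ E := by
          intro h
          have := hz₀K.2
          simp only [Set.mem_setOf_eq, h, sub_self, abs_zero] at this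
          linarith
        rcases lt_or_gt_of_ne hz₀ne with h | h
        · have hz : 0 < G z₀ := by
            have := hgt z₀ ⟨lt_of_lt_of_le hc1 hz₀K.1.1, h⟩; simp only [hGdef]; linarith
          nlinarith
        · have hz : G z₀ < 0 := by
            have := hlt z₀ h; simp only [hGdef]; linarith
          nlinarith
      set δ : ℝ := -((z₀ - E) * G z₀) with hδdef
      have hδpos : 0 < δ := by simp only [hδdef]; linarith
      have hbound : ∀ t : ℝ, 0 ≤ t → (x t - E) * G (x t) ≤ -δ := by
        intro t ht
        have h := hz₀max (hmemK t ht)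
        simp only [Set.mem_setOf_eq] at h
        simp only [hδdef]
        linarith
      exact solow_aux_neg (fun s => (x s - E) ^ 2)
        (fun t => 2 * ((x t - E) * G (x t))) (2 * δ) (by linarith)
        hV (fun t ht => by
          have := hbound t ht
          show 2 * ((x t - E) * G (x t)) ≤ -(2 * δ)
          linarith)
        (fun t ht => sq_nonneg _)
    obtain ⟨t₀, ht₀, hVt₀⟩ := hex
    refine ⟨t₀, fun t ht => ?_⟩
    have ht' : (0 : ℝ) ≤ t := le_trans ht₀ ht
    have := hanti (Set.mem_Ici.mpr ht₀) (Set.mem_Ici.mpr ht') ht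
    simp only at this
    rw [Real.dist_eq]
    by_contra habs2
    push_neg at habs2
    nlinarith [sq_abs (x t - E), abs_nonneg (x t - E)]
  · refine ⟨rfl, ?_, ?_, ?_⟩
    · intro t _
      have : F ((fun _ : ℝ => E₁) t) - C * (fun _ : ℝ => E₁) t = 0 := by
        simp [hE₁eq]
      rw [this]
      exact hasDerivAt_const t E₁
    · rw [abs_sub_comm]
      exact abs_of_pos (by linarith)
    · intro h
      have := tendsto_nhds_unique h tendsto_const_nhds
      linarith [this ▸ hE₁E]
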